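/- arXiv:2307.06539 — 3 statements merged into one kernel-verified Lean document; each statement's English description precedes it below -/
import Mathlib

section
/- Let 0 < β < 4 and let u₁, u₂ be C² solutions on [0,∞) of u'' = (e^u − 1)/√(1 − (β/4)(e^u − 1)²) with u₁(0) = u₂(0) and u₁(t), u₂(t) → 0 as t → ∞, with u₁, u₂ both strictly negative. Then u₁ ≡ u₂ on [0,∞). -/
open Real Filter Set

private lemma fmono {c : ℝ} (hc0 : 0 < c) (hc1 : c < 1) {a b : ℝ} (hb : b < 0) (hab : a < b) :
    (Real.exp a - 1) / Real.sqrt (1 - c * (Real.exp a - 1) ^ 2) <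
    (Real.exp b - 1) / Real.sqrt (1 - c * (Real.exp b - 1) ^ 2) := by
  set x := Real.exp a - 1 with hxdef
  set y := Real.exp b - 1 with hydef
  have hxy : x < y := by
    have := Real.exp_lt_exp.mpr hab
    simp only [hxdef, hydef]; linarith
  have hy0 : y < 0 := by
    have : Real.exp b < 1 := Real.exp_lt_one_iff.mpr hb
    simp only [hydef]; linarith
  have hx1 : -1 < x := by
    have := Real.exp_pos a
    simp only [hxdef]; linarith
  have hy1 : -1 < y := by
    have := Real.exp_pos b
    simp only [hydef]; linarith
  have hx0 : x < 0 := lt_trans hxy hy0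
  have hpx : 0 < 1 - c * x ^ 2 := by nlinarith
  have hpy : 0 < 1 - c * y ^ 2 := by nlinarith
  have hx2y2 : y ^ 2 < x ^ 2 := by nlinarith
  have hdx0 : 0 < Real.sqrt (1 - c * x ^ 2) := Real.sqrt_pos.mpr hpx
  have hdy0 : 0 < Real.sqrt (1 - c * y ^ 2) := Real.sqrt_pos.mpr hpy
  have hdxdy : Real.sqrt (1 - c * x ^ 2) < Real.sqrt (1 - c * y ^ 2) :=
    Real.sqrt_lt_sqrt hpx.le (by nlinarith)
  rw [div_lt_div_iff₀ hdx0 hdy0]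
  nlinarith [mul_neg_of_neg_of_pos hx0 (sub_pos.mpr hdxdy),
    mul_neg_of_neg_of_pos (sub_neg.mpr hxy) hdx0]

private lemma aux_le (β : ℝ) (hβ0 : 0 < β) (hβ4 : β < 4) (u₁ u₂ : ℝ → ℝ)
    (hu₁ : ContDiff ℝ 2 u₁) (hu₂ : ContDiff ℝ 2 u₂)
    (hode₁ : ∀ t, 0 ≤ t → deriv (deriv u₁) t =
      (Real.exp (u₁ t) - 1) / Real.sqrt (1 - β / 4 * (Real.exp (u₁ t) - 1) ^ 2))
    (hode₂ : ∀ t, 0 ≤ t → deriv (deriv u₂) t =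
      (Real.exp (u₂ t) - 1) / Real.sqrt (1 - β / 4 * (Real.exp (u₂ t) - 1) ^ 2))
    (h0 : u₁ 0 = u₂ 0)
    (hlim₁ : Filter.Tendsto u₁ Filter.atTop (nhds 0))
    (hlim₂ : Filter.Tendsto u₂ Filter.atTop (nhds 0))
    (hneg₁ : ∀ t, 0 ≤ t → u₁ t < 0) (hneg₂ : ∀ t, 0 ≤ t → u₂ t < 0) :
    ∀ t, 0 ≤ t → u₁ t ≤ u₂ t := by
  by_contra hcon
  push_neg at hcon
  obtain ⟨t₀, ht₀0, hgt⟩ := hcon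
  set w : ℝ → ℝ := fun t => u₁ t - u₂ t with hwdef
  have hw2 : ContDiff ℝ 2 w := hu₁.sub hu₂
  have hwc : Continuous w := hw2.continuous
  have hwt₀ : 0 < w t₀ := sub_pos.mpr hgt
  have hw0 : w 0 = 0 := by simp [hwdef, h0]
  have hwlim : Tendsto w atTop (nhds 0) := by
    have := hlim₁.sub hlim₂
    simpa using this
  -- find T beyond which w < w t₀
  have hev : ∀ᶠ t in atTop, w t < w t₀ := hwlim.eventually_lt_const hwt₀
  obtain ⟨T₀, hT₀⟩ := eventually_atTop.mp hev
  set T : ℝ := max T₀ (t₀ + 1) with hTdef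
  have hTt₀ : t₀ < T := lt_of_lt_of_le (lt_add_one t₀) (le_max_right _ _)
  have hT0 : 0 < T := lt_of_le_of_lt ht₀0 hTt₀
  have hTbig : ∀ t, T ≤ t → w t < w t₀ := fun t ht => hT₀ t (le_trans (le_max_left _ _) ht)
  -- max on [0,T]
  obtain ⟨s, hsmem, hsmax⟩ := (isCompact_Icc (a := (0:ℝ)) (b := T)).exists_isMaxOn
    (nonempty_Icc.mpr hT0.le) hwc.continuousOn
  have hsmax' : ∀ x ∈ Icc (0:ℝ) T, w x ≤ w s := hsmax
  have ht₀mem : t₀ ∈ Icc (0:ℝ) T := ⟨ht₀0, hTt₀.le⟩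
  have hws : w t₀ ≤ w s := hsmax' t₀ ht₀mem
  have hwspos : 0 < w s := lt_of_lt_of_le hwt₀ hws
  have hglobal : ∀ t, 0 ≤ t → w t ≤ w s := by
    intro t ht
    rcases le_or_gt t T with h | h
    · exact hsmax' t ⟨ht, h⟩
    · exact le_of_lt (lt_of_lt_of_le (hTbig t h.le) hws)
  have hs0 : 0 < s := by
    rcases hsmem.1.lt_or_eq with h | h
    · exact h
    · exfalso; rw [← h, hw0] at hwspos; exact lt_irrefl _ hwspos
  have hsT : s < T := by
    rcases hsmem.2.lt_or_eq with h | h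
    · exact h
    · exfalso; have := hTbig s h.ge; linarith
  -- derivatives
  have h2eq : (2 : WithTop ℕ∞) = 1 + 1 := by norm_num
  have hu₁d : Differentiable ℝ u₁ := hu₁.differentiable (by norm_num)
  have hu₂d : Differentiable ℝ u₂ := hu₂.differentiable (by norm_num)
  have hu₁' : ContDiff ℝ 1 (deriv u₁) := (contDiff_succ_iff_deriv.mp (h2eq ▸ hu₁)).2.2
  have hu₂' : ContDiff ℝ 1 (deriv u₂) := (contDiff_succ_iff_deriv.mp (h2eq ▸ hu₂)).2.2
  have hw' : ContDiff ℝ 1 (deriv w) := (contDiff_succ_iff_deriv.mp (h2eq ▸ hw2)).2.2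
  have hwd : Differentiable ℝ w := hw2.differentiable (by norm_num)
  have hdw : deriv w = fun t => deriv u₁ t - deriv u₂ t :=
    funext fun t => deriv_sub (hu₁d t) (hu₂d t)
  have hd2w : ∀ t, deriv (deriv w) t = deriv (deriv u₁) t - deriv (deriv u₂) t := by
    intro t
    rw [hdw]
    exact deriv_fun_sub (hu₁'.differentiable (by norm_num) t) (hu₂'.differentiable (by norm_num) t)
  -- local max at s
  have hloc : IsLocalMax w s := by
    filter_upwards [Ioo_mem_nhds hs0 hsT] with x hx
    exact hsmax' x ⟨hx.1.le, hx.2.le⟩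
  have hds0 : deriv w s = 0 := hloc.deriv_eq_zero
  -- positivity of second derivative at s
  have hc0 : 0 < β / 4 := by linarith
  have hc1 : β / 4 < 1 := by linarith
  have hu₂u₁ : u₂ s < u₁ s := sub_pos.mp hwspos
  have hK : 0 < deriv (deriv w) s := by
    rw [hd2w s, hode₁ s hs0.le, hode₂ s hs0.le]
    exact sub_pos.mpr (fmono hc0 hc1 (hneg₁ s hs0.le) hu₂u₁)
  have hcont2 : Continuous (deriv (deriv w)) := hw'.continuous_deriv le_rfl
  have hopen : {x : ℝ | 0 < deriv (deriv w) x} ∈ nhds s :=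
    (isOpen_lt continuous_const hcont2).mem_nhds hK
  obtain ⟨ε, hε, hball⟩ := Metric.mem_nhds_iff.mp hopen
  set δ : ℝ := ε / 2 with hδdef
  have hδ0 : 0 < δ := by positivity
  have hsub : Icc s (s + δ) ⊆ {x : ℝ | 0 < deriv (deriv w) x} := by
    intro x hx
    apply hball
    rw [Metric.mem_ball, Real.dist_eq, abs_lt]
    constructor <;> [linarith [hx.1]; linarith [hx.2]]
  have hmono1 : StrictMonoOn (deriv w) (Icc s (s + δ)) := by
    apply strictMonoOn_of_deriv_pos (convex_Icc _ _) hw'.continuous.continuousOn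
    intro x hx
    rw [interior_Icc] at hx
    exact hsub ⟨hx.1.le, hx.2.le⟩
  have hdwpos : ∀ x ∈ Ioo s (s + δ), 0 < deriv w x := by
    intro x hx
    have := hmono1 ⟨le_rfl, by linarith⟩ ⟨hx.1.le, hx.2.le⟩ hx.1
    rw [hds0] at this
    exact this
  have hmono2 : StrictMonoOn w (Icc s (s + δ)) := by
    apply strictMonoOn_of_deriv_pos (convex_Icc _ _) hwc.continuousOn
    intro x hx
    rw [interior_Icc] at hx
    exact hdwpos x hx
  have hlt : w s < w (s + δ) :=
    hmono2 ⟨le_rfl, by linarith⟩ ⟨by linarith, le_rfl⟩ (by linarith)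
  have := hglobal (s + δ) (by linarith)
  linarith

theorem stmt_7 (β : ℝ) (hβ0 : 0 < β) (hβ4 : β < 4) (u₁ u₂ : ℝ → ℝ)
    (hu₁ : ContDiff ℝ 2 u₁) (hu₂ : ContDiff ℝ 2 u₂)
    (hode₁ : ∀ t, 0 ≤ t → deriv (deriv u₁) t =
      (Real.exp (u₁ t) - 1) / Real.sqrt (1 - β / 4 * (Real.exp (u₁ t) - 1) ^ 2))
    (hode₂ : ∀ t, 0 ≤ t → deriv (deriv u₂) t =
      (Real.exp (u₂ t) - 1) / Real.sqrt (1 - β / 4 * (Real.exp (u₂ t) - 1) ^ 2))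
    (h0 : u₁ 0 = u₂ 0)
    (hlim₁ : Filter.Tendsto u₁ Filter.atTop (nhds 0))
    (hlim₂ : Filter.Tendsto u₂ Filter.atTop (nhds 0))
    (hneg₁ : ∀ t, 0 ≤ t → u₁ t < 0) (hneg₂ : ∀ t, 0 ≤ t → u₂ t < 0) :
    ∀ t, 0 ≤ t → u₁ t = u₂ t := by
  intro t ht
  exact le_antisymm
    (aux_le β hβ0 hβ4 u₁ u₂ hu₁ hu₂ hode₁ hode₂ h0 hlim₁ hlim₂ hneg₁ hneg₂ t ht)
    (aux_le β hβ0 hβ4 u₂ u₁ hu₂ hu₁ hode₂ hode₁ h0.symm hlim₂ hlim₁ hneg₂ hneg₁ t ht)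
end

section
/- Let 0 < β < 4 and let u : (−∞, x₀] → ℝ be negative, strictly decreasing, with u(x) → 0 as x → −∞, satisfying (u')² = F(u) with F(v) = ∫₀^v 2(e^s−1)/√(1−(β/4)(e^s−1)²) ds. Then there exist constants C, c > 0 and exponents 0 < α₁ ≤ α₂ such that c·e^{α₂ x} ≤ −u(x) ≤ C·e^{α₁ x} as x → −∞; in particular u(x) = O(e^{−|x|·α}) for some α > 0 as x → −∞. -/
set_option maxHeartbeats 1000000 in
theorem stmt_14 (β : ℝ) (hβ0 : 0 < β) (hβ4 : β < 4) (x₀ : ℝ) (u : ℝ → ℝ)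
    (hu : ContDiff ℝ 1 u)
    (huneg : ∀ x, x ≤ x₀ → u x < 0)
    (hanti : StrictAntiOn u (Set.Iic x₀))
    (hlim : Filter.Tendsto u Filter.atBot (nhds 0))
    (hfo : ∀ x, x ≤ x₀ → (deriv u x) ^ 2 =
      ∫ s in (0:ℝ)..(u x),
        2 * (Real.exp s - 1) / Real.sqrt (1 - β / 4 * (Real.exp s - 1) ^ 2)) :
    ∃ C c α₁ α₂ : ℝ, 0 < C ∧ 0 < c ∧ 0 < α₁ ∧ α₁ ≤ α₂ ∧
      ∀ x, x ≤ x₀ →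
        c * Real.exp (α₂ * x) ≤ -u x ∧ -u x ≤ C * Real.exp (α₁ * x) := by
  have hud : Differentiable ℝ u := hu.differentiable one_ne_zero
  set u₀ : ℝ := u x₀ with hu₀def
  have hu₀ : u₀ < 0 := huneg x₀ le_rfl
  have hrange : ∀ x, x ≤ x₀ → u₀ ≤ u x ∧ u x < 0 := by
    intro x hx
    refine ⟨?_, huneg x hx⟩
    rcases eq_or_lt_of_le hx with rfl | hlt
    · exact le_rfl
    · exact (hanti (Set.mem_Iic.2 hx) (Set.mem_Iic.2 le_rfl) hlt).le
  set σ : ℝ := Real.sqrt (1 - β / 4) with hσdef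
  have hβ41 : β / 4 < 1 := by linarith
  have hσpos : 0 < σ := Real.sqrt_pos.2 (by linarith)
  have hσ1 : σ ≤ 1 := Real.sqrt_le_one.2 (by linarith)
  set k : ℝ := (Real.exp u₀ - 1) / u₀ with hkdef
  have hkmul : k * u₀ = Real.exp u₀ - 1 := div_mul_cancel₀ _ hu₀.ne
  have hexpu₀ : Real.exp u₀ - 1 < 0 := by
    have := Real.exp_lt_one_iff.2 hu₀
    linarith
  have hkpos : 0 < k := div_pos_of_neg_of_neg hexpu₀ hu₀
  have hk1 : k ≤ 1 := by
    have := Real.add_one_le_exp u₀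
    nlinarith
  set b : ℝ := 1 / σ with hbdef
  have hbpos : 0 < b := by positivity
  have hb1 : 1 ≤ b := by
    rw [hbdef]
    exact one_le_one_div hσpos hσ1
  set g : ℝ → ℝ := fun s =>
      2 * (Real.exp s - 1) / Real.sqrt (1 - β / 4 * (Real.exp s - 1) ^ 2) with hgdef
  -- pointwise bounds on g on [u₀, 0]
  have hgbound : ∀ s ∈ Set.Icc u₀ (0:ℝ), (2 / σ) * s ≤ g s ∧ g s ≤ (2 * k) * s := by
    intro s hs
    obtain ⟨hs1, hs2⟩ := hs
    have hE0 : Real.exp s - 1 ≤ 0 := by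
      have := Real.exp_le_one_iff.2 hs2
      linarith
    have hE1 : -1 < Real.exp s - 1 := by
      have := Real.exp_pos s
      linarith
    have hEsq : (Real.exp s - 1) ^ 2 ≤ 1 := by nlinarith
    have hD : 1 - β / 4 ≤ 1 - β / 4 * (Real.exp s - 1) ^ 2 := by nlinarith
    have hDpos : 0 < 1 - β / 4 * (Real.exp s - 1) ^ 2 := by linarith
    have hsqrtD : σ ≤ Real.sqrt (1 - β / 4 * (Real.exp s - 1) ^ 2) :=
      Real.sqrt_le_sqrt hD
    have hsqrtDpos : 0 < Real.sqrt (1 - β / 4 * (Real.exp s - 1) ^ 2) :=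
      lt_of_lt_of_le hσpos hsqrtD
    have hsqrtD1 : Real.sqrt (1 - β / 4 * (Real.exp s - 1) ^ 2) ≤ 1 := by
      apply Real.sqrt_le_one.2
      nlinarith
    have hnum : 2 * (Real.exp s - 1) ≤ 0 := by linarith
    constructor
    · -- lower bound
      have h1 : (2 / σ) * s ≤ 2 * (Real.exp s - 1) / σ := by
        have := Real.add_one_le_exp s
        rw [div_mul_eq_mul_div]
        apply div_le_div_of_nonneg_right ?_ hσpos.le
        linarith
      have h2 : 2 * (Real.exp s - 1) / σ ≤ g s := by
        rw [hgdef]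
        rw [div_le_div_iff₀ hσpos hsqrtDpos]
        exact mul_le_mul_of_nonpos_left hsqrtD hnum
      linarith
    · -- upper bound
      have h2 : g s ≤ 2 * (Real.exp s - 1) := by
        rw [hgdef]
        have : 2 * (Real.exp s - 1) / Real.sqrt (1 - β / 4 * (Real.exp s - 1) ^ 2)
            ≤ 2 * (Real.exp s - 1) / 1 := by
          rw [div_le_div_iff₀ hsqrtDpos one_pos]
          calc 2 * (Real.exp s - 1) * 1 = 2 * (Real.exp s - 1) := by ring
          _ ≤ 2 * (Real.exp s - 1) * Real.sqrt (1 - β / 4 * (Real.exp s - 1) ^ 2) := by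
              nlinarith
        simpa using this
      -- chord bound: exp s - 1 ≤ k * s
      have hchord : Real.exp s - 1 ≤ k * s := by
        rcases eq_or_lt_of_le hs2 with rfl | hs2'
        · simp
        · have ht0 : 0 ≤ s / u₀ := div_nonneg_of_nonpos hs2 hu₀.le
          have ht1 : s / u₀ ≤ 1 := by
            rw [div_le_one_iff]
            exact Or.inr (Or.inr ⟨hu₀, hs1⟩)
          have hconv := convexOn_exp.2 (Set.mem_univ u₀) (Set.mem_univ (0:ℝ))
            ht0 (sub_nonneg.2 ht1) (by ring : s / u₀ + (1 - s / u₀) = 1)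
          have hcomb : (s / u₀) • u₀ + (1 - s / u₀) • (0:ℝ) = s := by
            rw [smul_eq_mul, smul_zero, add_zero, div_mul_cancel₀ _ hu₀.ne]
          rw [hcomb] at hconv
          have : Real.exp s ≤ (s / u₀) * Real.exp u₀ + (1 - s / u₀) := by
            simpa [smul_eq_mul, Real.exp_zero] using hconv
          have hk' : k * s = (s / u₀) * (Real.exp u₀ - 1) := by
            rw [hkdef]; field_simp
          rw [hk']
          nlinarith
      nlinarith
  -- continuity of g on [u₀, 0]
  have hgcont : ContinuousOn g (Set.Icc u₀ 0) := by
    apply ContinuousOn.div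
    · exact (continuous_const.mul (Real.continuous_exp.sub continuous_const)).continuousOn
    · exact (Real.continuous_sqrt.comp
        (continuous_const.sub (continuous_const.mul
          ((Real.continuous_exp.sub continuous_const).pow 2)))).continuousOn
    · intro s hs
      obtain ⟨hs1, hs2⟩ := hs
      have hE0 : Real.exp s - 1 ≤ 0 := by
        have := Real.exp_le_one_iff.2 hs2; linarith
      have hE1 : -1 < Real.exp s - 1 := by have := Real.exp_pos s; linarith
      have hDpos : 0 < 1 - β / 4 * (Real.exp s - 1) ^ 2 := by nlinarith
      exact (Real.sqrt_pos.2 hDpos).ne'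
  -- derivative bounds: for x ≤ x₀, k * v² ≤ (u')² ≤ b * v²
  have hFbound : ∀ x, x ≤ x₀ →
      k * (u x) ^ 2 ≤ (deriv u x) ^ 2 ∧ (deriv u x) ^ 2 ≤ b * (u x) ^ 2 := by
    intro x hx
    obtain ⟨hv1, hv2⟩ := hrange x hx
    set v : ℝ := u x with hvdef
    have hsub : Set.Icc v (0:ℝ) ⊆ Set.Icc u₀ 0 := Set.Icc_subset_Icc hv1 le_rfl
    have hgint : IntervalIntegrable g MeasureTheory.volume v 0 := by
      apply ContinuousOn.intervalIntegrable
      rw [Set.uIcc_of_le hv2.le]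
      exact hgcont.mono hsub
    have hAint : IntervalIntegrable (fun s => (2 / σ) * s) MeasureTheory.volume v 0 :=
      (continuous_const.mul continuous_id).intervalIntegrable _ _
    have hBint : IntervalIntegrable (fun s => (2 * k) * s) MeasureTheory.volume v 0 :=
      (continuous_const.mul continuous_id).intervalIntegrable _ _
    have hlow : ∫ s in v..(0:ℝ), (2 / σ) * s ≤ ∫ s in v..(0:ℝ), g s := by
      apply intervalIntegral.integral_mono_on hv2.le hAint hgint
      intro s hs
      exact (hgbound s (hsub hs)).1
    have hhigh : ∫ s in v..(0:ℝ), g s ≤ ∫ s in v..(0:ℝ), (2 * k) * s := by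
      apply intervalIntegral.integral_mono_on hv2.le hgint hBint
      intro s hs
      exact (hgbound s (hsub hs)).2
    have hA : ∫ s in v..(0:ℝ), (2 / σ) * s = (2 / σ) * (-(v ^ 2) / 2) := by
      rw [intervalIntegral.integral_const_mul, integral_id]
      ring
    have hB : ∫ s in v..(0:ℝ), (2 * k) * s = (2 * k) * (-(v ^ 2) / 2) := by
      rw [intervalIntegral.integral_const_mul, integral_id]
      ring
    have heq : (deriv u x) ^ 2 = -(∫ s in v..(0:ℝ), g s) := by
      rw [hfo x hx, intervalIntegral.integral_symm v 0]
    rw [hA] at hlow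
    rw [hB] at hhigh
    constructor
    · rw [heq]; nlinarith
    · rw [heq]
      have : (2 / σ) * (-(v ^ 2) / 2) = -(b * v ^ 2) := by
        rw [hbdef]; field_simp
      nlinarith
  -- deriv u is nonpositive on Iio x₀
  have hderiv_nonpos : ∀ x, x < x₀ → deriv u x ≤ 0 := by
    intro x hx
    have hd : HasDerivAt u (deriv u x) x := (hud x).hasDerivAt
    have hslope : Filter.Tendsto (slope u x) (nhdsWithin x {x}ᶜ) (nhds (deriv u x)) :=
      hasDerivAt_iff_tendsto_slope.1 hd
    have hmono : Filter.Tendsto (slope u x) (nhdsWithin x (Set.Ioi x)) (nhds (deriv u x)) :=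
      hslope.mono_left (nhdsWithin_mono x (fun y hy => ne_of_gt hy))
    have hev : ∀ᶠ y in nhdsWithin x (Set.Ioi x), slope u x y ≤ 0 := by
      filter_upwards [self_mem_nhdsWithin,
        eventually_nhdsWithin_of_eventually_nhds
          (Filter.eventually_of_mem (Iio_mem_nhds hx) (fun y hy => hy))] with y hy1 hy2
      have hxy : x < y := hy1
      have hy2' : y < x₀ := hy2
      have huy : u y < u x :=
        hanti (Set.mem_Iic.2 hx.le) (Set.mem_Iic.2 hy2'.le) hxy
      rw [slope_def_field]
      apply div_nonpos_of_nonpos_of_nonneg <;> linarith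
    exact le_of_tendsto hmono hev
  -- bounds on -deriv u = w'
  have hwderiv : ∀ x, x < x₀ →
      Real.sqrt k * (-u x) ≤ -deriv u x ∧ -deriv u x ≤ Real.sqrt b * (-u x) := by
    intro x hx
    obtain ⟨hF1, hF2⟩ := hFbound x hx.le
    obtain ⟨_, hv2⟩ := hrange x hx.le
    have habs : -deriv u x = Real.sqrt ((deriv u x) ^ 2) := by
      rw [Real.sqrt_sq_eq_abs, abs_of_nonpos (hderiv_nonpos x hx)]
    have hvabs : Real.sqrt ((u x) ^ 2) = -u x := by
      rw [Real.sqrt_sq_eq_abs, abs_of_nonpos hv2.le]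
    constructor
    · rw [habs]
      calc Real.sqrt k * (-u x) = Real.sqrt (k * (u x) ^ 2) := by
            rw [Real.sqrt_mul hkpos.le, hvabs]
      _ ≤ Real.sqrt ((deriv u x) ^ 2) := Real.sqrt_le_sqrt hF1
    · rw [habs]
      calc Real.sqrt ((deriv u x) ^ 2) ≤ Real.sqrt (b * (u x) ^ 2) := Real.sqrt_le_sqrt hF2
      _ = Real.sqrt b * (-u x) := by rw [Real.sqrt_mul hbpos.le, hvabs]
  set α₁ : ℝ := Real.sqrt k with hα₁def
  set α₂ : ℝ := Real.sqrt b with hα₂def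
  have hα₁pos : 0 < α₁ := Real.sqrt_pos.2 hkpos
  have hα₂pos : 0 < α₂ := Real.sqrt_pos.2 hbpos
  have hα₁₂ : α₁ ≤ α₂ := Real.sqrt_le_sqrt (le_trans hk1 hb1)
  -- auxiliary functions for Gronwall
  have hderivaux : ∀ (α : ℝ) (x : ℝ),
      HasDerivAt (fun y => (-u y) * Real.exp (-(α * y)))
        ((-deriv u x) * Real.exp (-(α * x)) + (-u x) * (Real.exp (-(α * x)) * (-α))) x := by
    intro α x
    have h1 : HasDerivAt (fun y => -u y) (-deriv u x) x := (hud x).hasDerivAt.neg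
    have h2 : HasDerivAt (fun y => Real.exp (-(α * y))) (Real.exp (-(α * x)) * (-α)) x := by
      have : HasDerivAt (fun y : ℝ => -(α * y)) (-α) x := by
        exact HasDerivAt.neg (by simpa using (hasDerivAt_id x).const_mul α)
      exact this.exp
    exact h1.mul h2
  have hucont : Continuous u := hu.continuous
  -- upper bound function is monotone
  have hmono1 : MonotoneOn (fun y => (-u y) * Real.exp (-(α₁ * y))) (Set.Iic x₀) := by
    apply monotoneOn_of_deriv_nonneg (convex_Iic x₀)
    · exact ((hucont.neg).mul (Real.continuous_exp.comp
        (continuous_const.mul continuous_id).neg)).continuousOn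
    · intro x _
      exact ((hderivaux α₁ x).differentiableAt).differentiableWithinAt
    · intro x hx
      rw [interior_Iic] at hx
      rw [(hderivaux α₁ x).deriv]
      have hepos : 0 < Real.exp (-(α₁ * x)) := Real.exp_pos _
      have := (hwderiv x hx).1
      nlinarith
  have hmono2 : AntitoneOn (fun y => (-u y) * Real.exp (-(α₂ * y))) (Set.Iic x₀) := by
    apply antitoneOn_of_deriv_nonpos (convex_Iic x₀)
    · exact ((hucont.neg).mul (Real.continuous_exp.comp
        (continuous_const.mul continuous_id).neg)).continuousOn
    · intro x _
      exact ((hderivaux α₂ x).differentiableAt).differentiableWithinAt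
    · intro x hx
      rw [interior_Iic] at hx
      rw [(hderivaux α₂ x).deriv]
      have hepos : 0 < Real.exp (-(α₂ * x)) := Real.exp_pos _
      have := (hwderiv x hx).2
      nlinarith
  refine ⟨(-u₀) * Real.exp (-(α₁ * x₀)), (-u₀) * Real.exp (-(α₂ * x₀)), α₁, α₂,
    mul_pos (by linarith) (Real.exp_pos _), mul_pos (by linarith) (Real.exp_pos _),
    hα₁pos, hα₁₂, ?_⟩
  intro x hx
  have h1 := hmono1 (Set.mem_Iic.2 hx) (Set.mem_Iic.2 le_rfl) hx
  have h2 := hmono2 (Set.mem_Iic.2 hx) (Set.mem_Iic.2 le_rfl) hx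
  simp only at h1 h2
  have he1 : 0 < Real.exp (α₁ * x) := Real.exp_pos _
  have he2 : 0 < Real.exp (α₂ * x) := Real.exp_pos _
  have hexp1 : Real.exp (-(α₁ * x)) * Real.exp (α₁ * x) = 1 := by
    rw [← Real.exp_add]; simp
  have hexp2 : Real.exp (-(α₂ * x)) * Real.exp (α₂ * x) = 1 := by
    rw [← Real.exp_add]; simp
  constructor
  · -- lower bound
    have := mul_le_mul_of_nonneg_right h2 he2.le
    calc (-u₀) * Real.exp (-(α₂ * x₀)) * Real.exp (α₂ * x)
        ≤ (-u x) * Real.exp (-(α₂ * x)) * Real.exp (α₂ * x) := this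
    _ = (-u x) * (Real.exp (-(α₂ * x)) * Real.exp (α₂ * x)) := by ring
    _ = -u x := by rw [hexp2, mul_one]
  · have := mul_le_mul_of_nonneg_right h1 he1.le
    calc -u x = (-u x) * (Real.exp (-(α₁ * x)) * Real.exp (α₁ * x)) := by
          rw [hexp1, mul_one]
    _ = (-u x) * Real.exp (-(α₁ * x)) * Real.exp (α₁ * x) := by ring
    _ ≤ (-u₀) * Real.exp (-(α₁ * x₀)) * Real.exp (α₁ * x) := this
end

section
/- Let 0 < β < 4 and suppose u is a C² solution of u'' = (e^u − 1)/√(1 − (β/4)(e^u − 1)²) on ℝ with u(−∞) = 0 and u(∞) = −∞. Then u(x) < 0 for all x ∈ ℝ. -/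
open Filter Set

set_option maxHeartbeats 2000000 in
theorem stmt_15 (β : ℝ) (hβ0 : 0 < β) (hβ4 : β < 4) (u : ℝ → ℝ)
    (hu : ContDiff ℝ 2 u)
    (hode : ∀ x, deriv (deriv u) x =
      (Real.exp (u x) - 1) / Real.sqrt (1 - β / 4 * (Real.exp (u x) - 1) ^ 2))
    (hbot : Filter.Tendsto u Filter.atBot (nhds 0))
    (htop : Filter.Tendsto u Filter.atTop Filter.atBot) :
    ∀ x, u x < 0 := by
  have hucont : Continuous u := hu.continuous
  have hudiff : Differentiable ℝ u := hu.differentiable (by norm_num)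
  have h1 : ContDiff ℝ 1 (deriv u) := by
    have := (contDiff_succ_iff_deriv (n := 1)).mp (by exact_mod_cast hu)
    exact this.2.2
  have hcont1 : Continuous (deriv u) := h1.continuous
  have hdiff1 : Differentiable ℝ (deriv u) := h1.differentiable (by norm_num)
  have hcont2 : Continuous (deriv (deriv u)) := h1.continuous_deriv le_rfl
  -- basic constants
  have hs : 0 < Real.sqrt β := Real.sqrt_pos.mpr hβ0
  set s := Real.sqrt β with hs_def
  have hsq : s ^ 2 = β := Real.sq_sqrt hβ0.le
  have hs2 : s < 2 := by nlinarith
  set L := Real.log (1 + 2 / s) with hL_def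
  have h1s : (1:ℝ) < 1 + 2 / s := by
    have : 0 < 2 / s := by positivity
    linarith
  have hLpos : 0 < L := Real.log_pos h1s
  have hexpL : Real.exp L = 1 + 2 / s := Real.exp_log (by linarith)
  have factA : ∀ v : ℝ, v < L ↔ 0 < 1 - β / 4 * (Real.exp v - 1) ^ 2 := by
    intro v
    constructor
    · intro h
      have h2 : Real.exp v < 1 + 2 / s := by
        rw [← hexpL]; exact Real.exp_lt_exp.mpr h
      have h3 : s * (Real.exp v - 1) < 2 := by
        have := (lt_div_iff₀ hs).mp (show Real.exp v - 1 < 2 / s by linarith)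
        linarith [this]
      have h4 : -2 < s * (Real.exp v - 1) := by
        have := Real.exp_pos v
        nlinarith
      nlinarith [mul_pos (show (0:ℝ) < 2 - s * (Real.exp v - 1) by linarith)
        (show (0:ℝ) < 2 + s * (Real.exp v - 1) by linarith)]
    · intro h
      by_contra hv
      push_neg at hv
      have h2 : 1 + 2 / s ≤ Real.exp v := by
        rw [← hexpL]; exact Real.exp_le_exp.mpr hv
      have h3 : 2 ≤ s * (Real.exp v - 1) := by
        have : 2 / s ≤ Real.exp v - 1 := by linarith
        calc (2:ℝ) = s * (2 / s) := by field_simp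
        _ ≤ s * (Real.exp v - 1) := by
            exact mul_le_mul_of_nonneg_left this hs.le
      nlinarith
  -- Step 1 : u < L everywhere
  have step1 : ∀ x, u x < L := by
    have hCclosed : IsClosed {x | L ≤ u x} := isClosed_le continuous_const hucont
    have hCopen : IsOpen {x | L ≤ u x} := by
      rw [isOpen_iff_mem_nhds]
      intro x hx
      have hx' : L ≤ u x := hx
      rcases lt_or_eq_of_le hx' with h | h
      · exact Filter.mem_of_superset ((isOpen_lt continuous_const hucont).mem_nhds h)
          (fun y (hy : L < u y) => le_of_lt hy)
      · by_contra hnb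
        have hcl : x ∈ closure {y | u y < L} := by
          rw [mem_closure_iff_nhds]
          intro t ht
          by_contra he
          rw [Set.not_nonempty_iff_eq_empty] at he
          apply hnb
          refine Filter.mem_of_superset ht (fun y hy => ?_)
          by_contra hy2
          have : y ∈ t ∩ {y | u y < L} := ⟨hy, (not_le.mp hy2 : u y < L)⟩
          rw [he] at this
          exact this
        have hne : (nhdsWithin x {y | u y < L}).NeBot :=
          mem_closure_iff_nhdsWithin_neBot.mp hcl
        have hDx : 1 - β / 4 * (Real.exp (u x) - 1) ^ 2 = 0 := by
          rw [← h, hexpL]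
          have hs0 : s ≠ 0 := ne_of_gt hs
          field_simp
          nlinarith [hsq]
        have hF : Continuous (fun y =>
            Real.sqrt (1 - β / 4 * (Real.exp (u y) - 1) ^ 2) * deriv (deriv u) y) :=
          (Real.continuous_sqrt.comp (by continuity)).mul hcont2
        have t1 : Tendsto (fun y =>
            Real.sqrt (1 - β / 4 * (Real.exp (u y) - 1) ^ 2) * deriv (deriv u) y)
            (nhdsWithin x {y | u y < L}) (nhds 0) := by
          have := (hF.tendsto x).mono_left (nhdsWithin_le_nhds (s := {y | u y < L}))
          rwa [hDx, Real.sqrt_zero, zero_mul] at this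
        have heq : ∀ y ∈ {y | u y < L},
            Real.sqrt (1 - β / 4 * (Real.exp (u y) - 1) ^ 2) * deriv (deriv u) y
              = Real.exp (u y) - 1 := by
          intro y hy
          have hD := (factA (u y)).mp hy
          rw [hode y]
          rw [mul_comm, div_mul_cancel₀]
          exact ne_of_gt (Real.sqrt_pos.mpr hD)
        have t1' : Tendsto (fun y => Real.exp (u y) - 1)
            (nhdsWithin x {y | u y < L}) (nhds 0) := by
          refine t1.congr' ?_
          filter_upwards [self_mem_nhdsWithin] with y hy
          exact heq y hy
        have t2 : Tendsto (fun y => Real.exp (u y) - 1)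
            (nhdsWithin x {y | u y < L}) (nhds (Real.exp (u x) - 1)) :=
          (((Real.continuous_exp.comp hucont).sub continuous_const).tendsto x).mono_left
            nhdsWithin_le_nhds
        have hval : Real.exp (u x) - 1 = 2 / s := by rw [← h, hexpL]; ring
        rw [hval] at t2
        have huniq : (0:ℝ) = 2 / s := tendsto_nhds_unique t1' t2
        have hpos : (0:ℝ) < 2 / s := by positivity
        linarith
    have := isClopen_iff.mp ⟨hCclosed, hCopen⟩
    rcases this with hempty | huniv
    · intro x
      by_contra hx
      have : x ∈ {x | L ≤ u x} := not_lt.mp hx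
      rw [hempty] at this
      exact this
    · exfalso
      obtain ⟨z, hz⟩ := (htop.eventually (eventually_lt_atBot 0)).exists
      have : z ∈ {x | L ≤ u x} := huniv ▸ Set.mem_univ z
      have : L ≤ u z := this
      linarith
  -- Step 2 : u ≤ 0 everywhere
  have step2 : ∀ x, u x ≤ 0 := by
    by_contra hcon
    push_neg at hcon
    obtain ⟨x₀, hx₀⟩ := hcon
    have hA : ∀ᶠ x in atBot, u x < u x₀ := hbot (Iio_mem_nhds hx₀)
    obtain ⟨a, ha⟩ := eventually_atBot.mp hA
    have hB : ∀ᶠ x in atTop, u x < u x₀ := htop.eventually (eventually_lt_atBot (u x₀))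
    obtain ⟨b, hb⟩ := eventually_atTop.mp hB
    have hax : a < x₀ := by
      by_contra hc
      exact absurd (ha x₀ (not_lt.mp hc)) (lt_irrefl _)
    have hxb : x₀ < b := by
      by_contra hc
      exact absurd (hb x₀ (not_lt.mp hc)) (lt_irrefl _)
    obtain ⟨c, hcmem, hcmax⟩ := isCompact_Icc.exists_isMaxOn
      (Set.nonempty_Icc.mpr (by linarith)) (hucont.continuousOn (s := Set.Icc a b))
    have hx₀mem : x₀ ∈ Set.Icc a b := ⟨hax.le, hxb.le⟩
    have hcx₀ : u x₀ ≤ u c := hcmax hx₀mem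
    have hglob : ∀ y, u y ≤ u c := by
      intro y
      by_cases hy : y ∈ Set.Icc a b
      · exact hcmax hy
      · rw [Set.mem_Icc, not_and_or] at hy
        rcases hy with hy | hy
        · exact le_trans (ha y (not_le.mp hy).le).le hcx₀
        · exact le_trans (hb y (not_le.mp hy).le).le hcx₀
    have hloc : IsLocalMax u c := Filter.Eventually.of_forall hglob
    have hd0 : deriv u c = 0 := hloc.deriv_eq_zero
    have hucpos : 0 < u c := lt_of_lt_of_le hx₀ hcx₀
    have hDc : 0 < 1 - β / 4 * (Real.exp (u c) - 1) ^ 2 := (factA (u c)).mp (step1 c)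
    have hNc : 0 < Real.exp (u c) - 1 := by
      have := Real.exp_lt_exp.mpr hucpos
      rw [Real.exp_zero] at this
      linarith
    have hc2 : 0 < deriv (deriv u) c := by
      rw [hode c]
      exact div_pos hNc (Real.sqrt_pos.mpr hDc)
    obtain ⟨ε, hε, hball⟩ := Metric.isOpen_iff.mp
      (isOpen_lt continuous_const hcont2) c hc2
    have hmono' : StrictMonoOn (deriv u) (Set.Icc c (c + ε / 2)) := by
      apply strictMonoOn_of_deriv_pos (convex_Icc _ _) hcont1.continuousOn
      intro y hy
      rw [interior_Icc] at hy
      apply hball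
      rw [Metric.mem_ball, Real.dist_eq, abs_lt]
      constructor <;> [linarith [hy.1]; linarith [hy.2]]
    have hmonou : StrictMonoOn u (Set.Icc c (c + ε / 4)) := by
      apply strictMonoOn_of_deriv_pos (convex_Icc _ _) hucont.continuousOn
      intro y hy
      rw [interior_Icc] at hy
      have := hmono' ⟨le_rfl, by linarith⟩ ⟨hy.1.le, by have := hy.2; linarith⟩ hy.1
      rwa [hd0] at this
    have : u c < u (c + ε / 4) :=
      hmonou ⟨le_rfl, by linarith⟩ ⟨by linarith, le_rfl⟩ (by linarith)
    exact absurd (hglob (c + ε / 4)) (not_le.mpr this)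
  -- Step 3 : strict negativity via Gronwall
  intro x
  rcases lt_or_eq_of_le (step2 x) with h | h
  · exact h
  · exfalso
    have hglob : ∀ y, u y ≤ u x := by intro y; rw [h]; exact step2 y
    have hloc : IsLocalMax u x := Filter.Eventually.of_forall hglob
    have hd0 : deriv u x = 0 := hloc.deriv_eq_zero
    have hd4 : (0:ℝ) < 1 - β / 4 := by linarith
    set d := Real.sqrt (1 - β / 4) with hd_def
    have hdpos : 0 < d := Real.sqrt_pos.mpr hd4
    set K := 1 + 1 / d with hK_def
    have hKpos : 0 < K := by positivity
    -- pointwise bound on u''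
    have hbnd : ∀ y, |deriv (deriv u) y| ≤ |u y| / d := by
      intro y
      have huy : u y ≤ 0 := step2 y
      have heyle : Real.exp (u y) ≤ 1 := by
        calc Real.exp (u y) ≤ Real.exp 0 := Real.exp_le_exp.mpr huy
        _ = 1 := Real.exp_zero
      have heypos : 0 < Real.exp (u y) := Real.exp_pos _
      have hNle : |Real.exp (u y) - 1| ≤ |u y| := by
        rw [abs_of_nonpos (by linarith), abs_of_nonpos huy]
        have := Real.add_one_le_exp (u y)
        linarith
      have hDge : 1 - β / 4 ≤ 1 - β / 4 * (Real.exp (u y) - 1) ^ 2 := by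
        have hw : (Real.exp (u y) - 1) ^ 2 ≤ 1 := by
          nlinarith [mul_nonneg (by linarith : (0:ℝ) ≤ 1 - (Real.exp (u y) - 1))
            (by linarith : (0:ℝ) ≤ 1 + (Real.exp (u y) - 1))]
        linarith [mul_le_mul_of_nonneg_left hw (by linarith : (0:ℝ) ≤ β / 4)]
      have hsqge : d ≤ Real.sqrt (1 - β / 4 * (Real.exp (u y) - 1) ^ 2) :=
        Real.sqrt_le_sqrt hDge
      have hsqpos : 0 < Real.sqrt (1 - β / 4 * (Real.exp (u y) - 1) ^ 2) :=
        lt_of_lt_of_le hdpos hsqge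
      rw [hode y, abs_div, abs_of_pos hsqpos]
      exact div_le_div₀ (abs_nonneg _) hNle hdpos hsqge
    obtain ⟨v, hv_def⟩ : ∃ v : ℝ → ℝ, v = fun y => u y * u y + deriv u y * deriv u y :=
      ⟨_, rfl⟩
    have hvy : ∀ y, v y = u y * u y + deriv u y * deriv u y := by
      intro y; rw [hv_def]
    have hvd : ∀ y, HasDerivAt v
        (deriv u y * u y + u y * deriv u y +
          (deriv (deriv u) y * deriv u y + deriv u y * deriv (deriv u) y)) y := by
      intro y
      rw [hv_def]
      exact (((hudiff y).hasDerivAt.mul (hudiff y).hasDerivAt)).add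
        (((hdiff1 y).hasDerivAt.mul ((hdiff1 y).hasDerivAt)))
    have hvnonneg : ∀ y, 0 ≤ v y := by
      intro y
      rw [hvy y]
      exact add_nonneg (mul_self_nonneg _) (mul_self_nonneg _)
    have hvbound : ∀ y, |deriv v y| ≤ K * v y := by
      intro y
      rw [(hvd y).deriv]
      have hb := hbnd y
      have h2ab : 2 * |u y| * |deriv u y| ≤ u y * u y + deriv u y * deriv u y := by
        nlinarith [sq_nonneg (|u y| - |deriv u y|), abs_mul_abs_self (u y),
          abs_mul_abs_self (deriv u y)]
      have h2 : 2 * |deriv u y| * |deriv (deriv u) y| ≤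
          (u y * u y + deriv u y * deriv u y) / d := by
        have : 2 * |deriv u y| * |deriv (deriv u) y| ≤ 2 * |deriv u y| * (|u y| / d) := by
          apply mul_le_mul_of_nonneg_left hb (by positivity)
        calc 2 * |deriv u y| * |deriv (deriv u) y| ≤ 2 * |deriv u y| * (|u y| / d) := this
        _ = (2 * |u y| * |deriv u y|) / d := by ring
        _ ≤ (u y * u y + deriv u y * deriv u y) / d := by gcongr
      have e1 : |deriv u y * u y + u y * deriv u y +
          (deriv (deriv u) y * deriv u y + deriv u y * deriv (deriv u) y)| ≤
          2 * |u y| * |deriv u y| + 2 * |deriv u y| * |deriv (deriv u) y| := by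
        have t1 := abs_add_le (deriv u y * u y + u y * deriv u y)
          (deriv (deriv u) y * deriv u y + deriv u y * deriv (deriv u) y)
        have e2 : deriv u y * u y + u y * deriv u y = 2 * (u y * deriv u y) := by ring
        have e3 : deriv (deriv u) y * deriv u y + deriv u y * deriv (deriv u) y =
            2 * (deriv u y * deriv (deriv u) y) := by ring
        rw [e2, e3] at t1
        rw [abs_mul, abs_mul, abs_mul, abs_mul] at t1
        simp only [abs_two] at t1
        calc |deriv u y * u y + u y * deriv u y +
            (deriv (deriv u) y * deriv u y + deriv u y * deriv (deriv u) y)|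
            = |2 * (u y * deriv u y) + 2 * (deriv u y * deriv (deriv u) y)| := by ring_nf
          _ ≤ 2 * (|u y| * |deriv u y|) + 2 * (|deriv u y| * |deriv (deriv u) y|) := by
              have := abs_add_le (2 * (u y * deriv u y)) (2 * (deriv u y * deriv (deriv u) y))
              rw [abs_mul, abs_mul, abs_mul, abs_mul] at this
              simpa [abs_two] using this
          _ = 2 * |u y| * |deriv u y| + 2 * |deriv u y| * |deriv (deriv u) y| := by ring
      have hKv : K * v y = v y + v y / d := by
        rw [hK_def]
        ring
      calc |deriv u y * u y + u y * deriv u y +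
          (deriv (deriv u) y * deriv u y + deriv u y * deriv (deriv u) y)| ≤
          2 * |u y| * |deriv u y| + 2 * |deriv u y| * |deriv (deriv u) y| := e1
        _ ≤ v y + v y / d := by
            rw [hvy y]
            exact add_le_add h2ab h2
        _ = K * v y := hKv.symm
    -- Gronwall
    have hvdiff : Differentiable ℝ v := fun y => (hvd y).differentiableAt
    have hvx : v x = 0 := by rw [hvy x, h, hd0]; ring
    have key : ∀ y, v y ≤ 0 := by
      intro y
      rcases le_total x y with hxy | hxy
      · have he : ∀ t : ℝ, HasDerivAt (fun t => Real.exp (-K * t))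
            (Real.exp (-K * t) * -K) t := by
          intro t
          have : HasDerivAt (fun t : ℝ => -K * t) (-K) t := by
            simpa using (hasDerivAt_id t).const_mul (-K)
          exact this.exp
        have hg : ∀ t : ℝ, HasDerivAt (fun t => v t * Real.exp (-K * t))
            (deriv v t * Real.exp (-K * t) + v t * (Real.exp (-K * t) * -K)) t := by
          intro t
          exact ((hvdiff t).hasDerivAt).mul (he t)
        have hanti : AntitoneOn (fun t => v t * Real.exp (-K * t)) (Set.Icc x y) := by
          apply antitoneOn_of_deriv_nonpos (convex_Icc _ _)
          · exact (hvdiff.continuous.mul (by continuity)).continuousOn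
          · intro t ht
            exact ((hg t).differentiableAt).differentiableWithinAt
          · intro t ht
            rw [(hg t).deriv]
            have hvb := (abs_le.mp (hvbound t)).2
            have hexp : 0 < Real.exp (-K * t) := Real.exp_pos _
            nlinarith
        have := hanti (Set.left_mem_Icc.mpr hxy) (Set.right_mem_Icc.mpr hxy) hxy
        simp only [] at this
        rw [hvx, zero_mul] at this
        have hexp : 0 < Real.exp (-K * y) := Real.exp_pos _
        nlinarith
      · have he : ∀ t : ℝ, HasDerivAt (fun t => Real.exp (K * t))
            (Real.exp (K * t) * K) t := by
          intro t
          have : HasDerivAt (fun t : ℝ => K * t) K t := by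
            simpa using (hasDerivAt_id t).const_mul K
          exact this.exp
        have hg : ∀ t : ℝ, HasDerivAt (fun t => v t * Real.exp (K * t))
            (deriv v t * Real.exp (K * t) + v t * (Real.exp (K * t) * K)) t := by
          intro t
          exact ((hvdiff t).hasDerivAt).mul (he t)
        have hmono : MonotoneOn (fun t => v t * Real.exp (K * t)) (Set.Icc y x) := by
          apply monotoneOn_of_deriv_nonneg (convex_Icc _ _)
          · exact (hvdiff.continuous.mul (by continuity)).continuousOn
          · intro t ht
            exact ((hg t).differentiableAt).differentiableWithinAt
          · intro t ht
            rw [(hg t).deriv]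
            have hvb := (abs_le.mp (hvbound t)).1
            have hexp : 0 < Real.exp (K * t) := Real.exp_pos _
            nlinarith
        have := hmono (Set.left_mem_Icc.mpr hxy) (Set.right_mem_Icc.mpr hxy) hxy
        simp only [] at this
        rw [hvx, zero_mul] at this
        have hexp : 0 < Real.exp (K * y) := Real.exp_pos _
        nlinarith
    have hzero : ∀ y, u y = 0 := by
      intro y
      have h1' : u y * u y ≤ 0 := by
        have hk := key y
        rw [hvy y] at hk
        nlinarith [mul_self_nonneg (deriv u y)]
      exact mul_self_eq_zero.mp (le_antisymm h1' (mul_self_nonneg _))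
    obtain ⟨z, hz⟩ := (htop.eventually (eventually_lt_atBot 0)).exists
    rw [hzero z] at hz
    exact lt_irrefl 0 hz
end
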